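/- Define the binary Shannon entropy H₂(x) = −x·log₂x − (1−x)·log₂(1−x), with the convention 0·log₂0 = 0, and let f(p) = 1 − p² + H₂(p²) − 2·H₂(p). Then: (i) f(p) > 0 for all p ∈ (0, 0.128); (ii) f(p) < 0 for all p ∈ (0.129, 1); and (iii) there exists p₀ ∈ [0.128, 0.129] with f(p₀) = 0. Consequently, the quantum-switch lower bound Q_QS^LB(p,p) = p² + max{0, f(p)} equals p² for p ∈ [0.129, 1] and equals 1 + H₂(p²) − 2·H₂(p) for p ∈ (0, 0.128]. -/

import Mathlib

/-- The binary Shannon entropy `H₂(x) = −x·log₂x − (1−x)·log₂(1−x)`,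
with the convention `0·log₂0 = 0` (automatic since `Real.logb 2 0 = 0`). -/
noncomputable def H2 (x : ℝ) : ℝ := -(x * Real.logb 2 x) - (1 - x) * Real.logb 2 (1 - x)

/-- `f(p) = 1 − p² + H₂(p²) − 2·H₂(p)`. -/
noncomputable def f (p : ℝ) : ℝ := 1 - p ^ 2 + H2 (p ^ 2) - 2 * H2 p

/-- The lower bound `Q_QS^LB(p,q)` on the quantum-switch capacity (Proposition 1). -/
noncomputable def QSLB (p q : ℝ) : ℝ :=
  p * q + max 0 (1 - p * q + H2 (p * q) - H2 p - H2 q)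

/-- Auxiliary function: `f p = (1-p) * g p / log 2` for `p ∈ (0,1)`. -/
noncomputable def g (p : ℝ) : ℝ :=
  (1+p) * Real.log 2 + 2*p*Real.log p + (1-p)*Real.log (1-p) - (1+p)*Real.log (1+p)

lemma f_eq {p : ℝ} (h0 : 0 < p) (h1 : p < 1) :
    f p = (1 - p) * g p / Real.log 2 := by
  have hl2 : Real.log 2 ≠ 0 := by
    have := Real.log_pos (by norm_num : (1:ℝ) < 2); linarith
  have hp2 : Real.log (p^2) = 2 * Real.log p := by
    rw [Real.log_pow]; push_cast; ring
  have h12 : (1 : ℝ) - p^2 = (1-p)*(1+p) := by ring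
  have hm : Real.log ((1-p)*(1+p)) = Real.log (1-p) + Real.log (1+p) :=
    Real.log_mul (by linarith) (by linarith)
  simp only [f, H2, g, Real.logb, h12, hm, hp2]
  field_simp
  ring

lemma log_one_sub_bounds {x : ℝ} (h0 : 0 ≤ x) (h1 : x < 1) :
    -(x + x^2/2 + x^3/3 + x^4/4 + x^5/5) - x^6/(1-x) ≤ Real.log (1-x) ∧
    Real.log (1-x) ≤ -(x + x^2/2 + x^3/3 + x^4/4 + x^5/5) + x^6/(1-x) := by
  have h := Real.abs_log_sub_add_sum_range_le (x := x) (by rw [abs_of_nonneg h0]; exact h1) 5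
  rw [abs_of_nonneg h0, abs_le] at h
  norm_num [Finset.sum_range_succ] at h
  constructor <;> nlinarith [h.1, h.2]

lemma log_one_add_bounds {x : ℝ} (h0 : 0 ≤ x) (h1 : x < 1) :
    (x - x^2/2 + x^3/3 - x^4/4 + x^5/5) - x^6/(1-x) ≤ Real.log (1+x) ∧
    Real.log (1+x) ≤ (x - x^2/2 + x^3/3 - x^4/4 + x^5/5) + x^6/(1-x) := by
  have h := Real.abs_log_sub_add_sum_range_le (x := -x) (by rw [abs_neg, abs_of_nonneg h0]; exact h1) 5
  rw [abs_neg, abs_of_nonneg h0, abs_le, show (1:ℝ) - -x = 1 + x by ring] at h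
  norm_num [Finset.sum_range_succ] at h
  constructor <;> nlinarith [h.1, h.2]

lemma g128_pos : 0 < g 0.128 := by
  have h2l := Real.log_two_gt_d9
  have ha := log_one_add_bounds (x := (0.024:ℝ)) (by norm_num) (by norm_num)
  have hb := log_one_sub_bounds (x := (0.128:ℝ)) (by norm_num) (by norm_num)
  have hc := log_one_add_bounds (x := (0.128:ℝ)) (by norm_num) (by norm_num)
  have hd : Real.log 0.128 = Real.log (1 + 0.024) - 3 * Real.log 2 := by
    rw [show (0.128:ℝ) = (1+0.024)/2^3 by norm_num,
        Real.log_div (by norm_num) (by norm_num), Real.log_pow]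
    norm_num
  unfold g
  rw [hd]
  norm_num at ha hb hc ⊢
  nlinarith [ha.1, ha.2, hb.1, hb.2, hc.1, hc.2]

lemma g129_neg : g 0.129 < 0 := by
  have h2u := Real.log_two_lt_d9
  have ha := log_one_add_bounds (x := (0.032:ℝ)) (by norm_num) (by norm_num)
  have hb := log_one_sub_bounds (x := (0.129:ℝ)) (by norm_num) (by norm_num)
  have hc := log_one_add_bounds (x := (0.129:ℝ)) (by norm_num) (by norm_num)
  have hd : Real.log 0.129 = Real.log (1 + 0.032) - 3 * Real.log 2 := by
    rw [show (0.129:ℝ) = (1+0.032)/2^3 by norm_num,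
        Real.log_div (by norm_num) (by norm_num), Real.log_pow]
    norm_num
  unfold g
  rw [hd]
  norm_num at ha hb hc ⊢
  nlinarith [ha.1, ha.2, hb.1, hb.2, hc.1, hc.2]

lemma g_hasDeriv {p : ℝ} (h0 : 0 < p) (h1 : p < 1) :
    HasDerivAt g (Real.log 2 + 2*Real.log p - Real.log (1-p) - Real.log (1+p)) p := by
  have A : HasDerivAt (fun q : ℝ => (1+q) * Real.log 2) (Real.log 2) p := by
    simpa using ((hasDerivAt_id p).const_add 1).mul_const (Real.log 2)
  have B : HasDerivAt (fun q : ℝ => 2*q*Real.log q) (2*(Real.log p + 1)) p := by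
    have h := (Real.hasDerivAt_mul_log (ne_of_gt h0)).const_mul 2
    have e : (fun q : ℝ => 2*q*Real.log q) = fun q : ℝ => 2*(q*Real.log q) := by
      funext q; ring
    rw [e]; exact h
  have C : HasDerivAt (fun q : ℝ => (1-q)*Real.log (1-q)) (-(Real.log (1-p) + 1)) p := by
    have inner : HasDerivAt (fun q : ℝ => 1 - q) (-1) p := by
      simpa using (hasDerivAt_id p).const_sub 1
    have h := (Real.hasDerivAt_mul_log (x := 1-p) (by linarith)).comp p inner
    simpa [Function.comp_def] using h
  have D : HasDerivAt (fun q : ℝ => (1+q)*Real.log (1+q)) (Real.log (1+p) + 1) p := by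
    have inner : HasDerivAt (fun q : ℝ => 1 + q) 1 p := by
      simpa using (hasDerivAt_id p).const_add 1
    have h := (Real.hasDerivAt_mul_log (x := 1+p) (by linarith)).comp p inner
    simpa [Function.comp_def] using h
  have h := ((A.add B).add C).sub D
  have e : Real.log 2 + 2*(Real.log p + 1) + -(Real.log (1-p) + 1) - (Real.log (1+p) + 1)
      = Real.log 2 + 2*Real.log p - Real.log (1-p) - Real.log (1+p) := by ring
  rw [e] at h
  exact h

lemma g_cont : Continuous g := by
  have e : g = fun p => (1+p)*Real.log 2 + 2*(p*Real.log p) + (1-p)*Real.log (1-p)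
      - (1+p)*Real.log (1+p) := by
    funext p; unfold g; ring
  rw [e]
  exact ((((continuous_const.add continuous_id).mul continuous_const).add
    (continuous_const.mul Real.continuous_mul_log)).add
    (Real.continuous_mul_log.comp (continuous_const.sub continuous_id))).sub
    (Real.continuous_mul_log.comp (continuous_const.add continuous_id))

lemma sqrt3_lt_one : Real.sqrt (1/3) < 1 := by
  rw [show (1:ℝ) = Real.sqrt 1 by rw [Real.sqrt_one]]
  exact Real.sqrt_lt_sqrt (by norm_num) (by norm_num)

lemma g_anti : StrictAntiOn g (Set.Ioc 0 (Real.sqrt (1/3))) := by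
  apply strictAntiOn_of_deriv_neg (convex_Ioc _ _) g_cont.continuousOn
  intro x hx
  rw [interior_Ioc] at hx
  obtain ⟨hx0, hxs⟩ := hx
  have hx1 : x < 1 := lt_trans hxs sqrt3_lt_one
  rw [(g_hasDeriv hx0 hx1).deriv]
  have hsq : x^2 < 1/3 := (Real.lt_sqrt hx0.le).mp hxs
  have h2 : Real.log 2 + 2*Real.log x = Real.log (2*x^2) := by
    rw [Real.log_mul (by norm_num) (by nlinarith), Real.log_pow]; push_cast; ring
  have h3 : Real.log (1-x) + Real.log (1+x) = Real.log (1 - x^2) := by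
    rw [← Real.log_mul (by nlinarith) (by nlinarith)]; ring_nf
  have key : Real.log (2*x^2) < Real.log (1-x^2) :=
    Real.log_lt_log (by positivity) (by nlinarith)
  linarith

lemma g_mono : StrictMonoOn g (Set.Icc (Real.sqrt (1/3)) 1) := by
  apply strictMonoOn_of_deriv_pos (convex_Icc _ _) g_cont.continuousOn
  intro x hx
  rw [interior_Icc] at hx
  obtain ⟨hxs, hx1⟩ := hx
  have hx0 : 0 < x := lt_trans (Real.sqrt_pos.mpr (by norm_num)) hxs
  rw [(g_hasDeriv hx0 hx1).deriv]
  have hsq : 1/3 < x^2 := by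
    have := (Real.sqrt_lt' hx0).mp hxs
    linarith
  have h2 : Real.log 2 + 2*Real.log x = Real.log (2*x^2) := by
    rw [Real.log_mul (by norm_num) (by nlinarith), Real.log_pow]; push_cast; ring
  have h3 : Real.log (1-x) + Real.log (1+x) = Real.log (1 - x^2) := by
    rw [← Real.log_mul (by nlinarith) (by nlinarith)]; ring_nf
  have key : Real.log (1-x^2) < Real.log (2*x^2) :=
    Real.log_lt_log (by nlinarith) (by nlinarith)
  linarith

lemma g_one : g 1 = 0 := by
  unfold g; norm_num

lemma le_sqrt3 : (0.129:ℝ) ≤ Real.sqrt (1/3) := by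
  rw [Real.le_sqrt (by norm_num) (by norm_num)]
  norm_num

lemma hlog2_pos : 0 < Real.log 2 := Real.log_pos (by norm_num)

lemma f128_pos : 0 < f 0.128 := by
  rw [f_eq (by norm_num) (by norm_num)]
  apply div_pos (mul_pos (by norm_num) g128_pos) hlog2_pos

lemma f129_neg : f 0.129 < 0 := by
  rw [f_eq (by norm_num) (by norm_num)]
  exact div_neg_of_neg_of_pos (mul_neg_of_pos_of_neg (by norm_num) g129_neg) hlog2_pos

lemma f_pos_of_mem {p : ℝ} (h0 : 0 < p) (h1 : p < 0.128) : 0 < f p := by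
  have hmem : p ∈ Set.Ioc 0 (Real.sqrt (1/3)) :=
    ⟨h0, le_trans (le_of_lt (lt_trans h1 (by norm_num))) le_sqrt3⟩
  have hmem' : (0.128:ℝ) ∈ Set.Ioc 0 (Real.sqrt (1/3)) :=
    ⟨by norm_num, le_trans (by norm_num) le_sqrt3⟩
  have hg : 0 < g p := lt_trans g128_pos (g_anti hmem hmem' h1)
  rw [f_eq h0 (by linarith)]
  exact div_pos (mul_pos (by linarith) hg) hlog2_pos

lemma f_neg_of_mem {p : ℝ} (h0 : 0.129 < p) (h1 : p < 1) : f p < 0 := by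
  have hg : g p < 0 := by
    rcases le_or_gt p (Real.sqrt (1/3)) with hc | hc
    · have hmem : p ∈ Set.Ioc 0 (Real.sqrt (1/3)) := ⟨by linarith, hc⟩
      have hmem' : (0.129:ℝ) ∈ Set.Ioc 0 (Real.sqrt (1/3)) := ⟨by norm_num, le_sqrt3⟩
      exact lt_trans (g_anti hmem' hmem h0) g129_neg
    · have hmem : p ∈ Set.Icc (Real.sqrt (1/3)) 1 := ⟨hc.le, h1.le⟩
      have hmem' : (1:ℝ) ∈ Set.Icc (Real.sqrt (1/3)) 1 := ⟨sqrt3_lt_one.le, le_refl 1⟩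
      have := g_mono hmem hmem' h1
      rw [g_one] at this
      exact this
  rw [f_eq (by linarith) h1]
  exact div_neg_of_neg_of_pos (mul_neg_of_pos_of_neg (by linarith) hg) hlog2_pos

lemma H2_cont : Continuous H2 := by
  have e : H2 = fun x => (-(x*Real.log x) - (1-x)*Real.log (1-x)) / Real.log 2 := by
    funext x; simp only [H2, Real.logb]; ring
  rw [e]
  exact ((Real.continuous_mul_log.neg).sub
    (Real.continuous_mul_log.comp (continuous_const.sub continuous_id))).div_const _

lemma f_cont : Continuous f := by
  have e : f = fun p => 1 - p^2 + H2 (p^2) - 2*H2 p := by funext p; rfl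
  rw [e]
  exact ((continuous_const.sub (continuous_pow 2)).add
    (H2_cont.comp (continuous_pow 2))).sub (continuous_const.mul H2_cont)

lemma f_one : f 1 = 0 := by
  norm_num [f, H2, Real.logb]

theorem corollary1_threshold :
    (∀ p ∈ Set.Ioo (0:ℝ) 0.128, 0 < f p) ∧
    (∀ p ∈ Set.Ioo (0.129:ℝ) 1, f p < 0) ∧
    (∃ p₀ ∈ Set.Icc (0.128:ℝ) 0.129, f p₀ = 0) ∧
    (∀ p ∈ Set.Icc (0.129:ℝ) 1, QSLB p p = p ^ 2) ∧
    (∀ p ∈ Set.Ioc (0:ℝ) 0.128, QSLB p p = 1 + H2 (p ^ 2) - 2 * H2 p) := by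
  have key : ∀ p : ℝ, 1 - p*p + H2 (p*p) - H2 p - H2 p = f p := by
    intro p
    rw [show p*p = p^2 by ring]
    simp only [f]; ring
  refine ⟨fun p hp => f_pos_of_mem hp.1 hp.2, fun p hp => f_neg_of_mem hp.1 hp.2, ?_, ?_, ?_⟩
  · have hsub := intermediate_value_Icc' (by norm_num : (0.128:ℝ) ≤ 0.129) f_cont.continuousOn
    obtain ⟨p₀, hp₀, hfp₀⟩ := hsub ⟨f129_neg.le, f128_pos.le⟩
    exact ⟨p₀, hp₀, hfp₀⟩
  · intro p hp
    have hfp : f p ≤ 0 := by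
      rcases eq_or_lt_of_le hp.2 with rfl | hlt
      · exact f_one.le
      · rcases eq_or_lt_of_le hp.1 with heq | hlt'
        · rw [← heq]; exact f129_neg.le
        · exact (f_neg_of_mem hlt' hlt).le
    simp only [QSLB]
    rw [key p, max_eq_left hfp]
    ring
  · intro p hp
    have hfp : 0 ≤ f p := by
      rcases eq_or_lt_of_le hp.2 with heq | hlt
      · rw [heq]; exact f128_pos.le
      · exact (f_pos_of_mem hp.1 hlt).le
    simp only [QSLB]
    rw [key p, max_eq_right hfp]
    simp only [f]; ring
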